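/- Let G be a countably infinite semigroup and suppose a family 𝒜 of subsets of G satisfies: (a) 𝒜 contains every thick subset of G; (b) 𝒜 is partition regular, i.e., whenever A ∈ 𝒜 and A = C_1 ∪ ⋯ ∪ C_r is a partition into finitely many pairwise disjoint sets, at least one C_i belongs to 𝒜; (c) if B ⊆ A ⊆ G and B ∈ 𝒜 then A ∈ 𝒜; and (d) if A ∈ 𝒜 and g ∈ G then gA ∈ 𝒜, where gA = {ga : a ∈ A}. Then 𝒜 contains every piecewise syndetic subset of G. -/

import Mathlib

/-- A set `A` in a semigroup `G` is thick if for every finite `F ⊆ G`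
there exists `g ∈ G` with `Fg ⊆ A`. -/
def Thick {G : Type*} [Semigroup G] (A : Set G) : Prop :=
  ∀ F : Finset G, ∃ g : G, ∀ f ∈ F, f * g ∈ A

/-- A set `A` in a semigroup `G` is piecewise syndetic if there is a finite
`H ⊆ G` such that `H⁻¹A = ⋃_{h ∈ H} h⁻¹A` is thick. -/
def PiecewiseSyndetic {G : Type*} [Semigroup G] (A : Set G) : Prop :=
  ∃ H : Finset G, Thick {x : G | ∃ h ∈ H, h * x ∈ A}

/-- If a family `𝒜` of subsets of a countably infinite semigroup `G`
(a) contains all thick sets, (b) is partition regular, (c) is upward closed,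
and (d) is closed under left shifts `A ↦ gA`, then `𝒜` contains every
piecewise syndetic subset of `G`. -/
theorem mem_of_piecewiseSyndetic {G : Type*} [Semigroup G] [Countable G] [Infinite G]
    (𝒜 : Set (Set G))
    (hthick : ∀ A : Set G, Thick A → A ∈ 𝒜)
    (hpr : ∀ A ∈ 𝒜, ∀ (r : ℕ) (C : Fin r → Set G),
      (∀ i j, i ≠ j → Disjoint (C i) (C j)) → A = ⋃ i, C i → ∃ i, C i ∈ 𝒜)
    (hup : ∀ A B : Set G, B ⊆ A → B ∈ 𝒜 → A ∈ 𝒜)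
    (hshift : ∀ A ∈ 𝒜, ∀ g : G, (fun x => g * x) '' A ∈ 𝒜)
    (A : Set G) (hA : PiecewiseSyndetic A) :
    A ∈ 𝒜 := by
  classical
  obtain ⟨H, hT⟩ := hA
  set T : Set G := {x : G | ∃ h ∈ H, h * x ∈ A} with hTdef
  have hTA : T ∈ 𝒜 := hthick T hT
  set l := H.toList with hl
  set r := l.length with hr
  set C : Fin r → Set G :=
    fun i => {x : G | l.get i * x ∈ A ∧ ∀ j : Fin r, j < i → l.get j * x ∉ A} with hC
  have hdisj : ∀ i j, i ≠ j → Disjoint (C i) (C j) := by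
    intro i j hij
    rw [Set.disjoint_left]
    rintro x ⟨hxi, hxi'⟩ ⟨hxj, hxj'⟩
    rcases lt_or_gt_of_ne hij with h | h
    · exact hxj' i h hxi
    · exact hxi' j h hxj
  have hunion : T = ⋃ i, C i := by
    ext x
    constructor
    · rintro ⟨h, hH, hx⟩
      have hex : ∃ j : ℕ, ∃ hj : j < r, l.get ⟨j, hj⟩ * x ∈ A := by
        obtain ⟨i, hi⟩ := List.mem_iff_get.mp ((Finset.mem_toList).mpr hH)
        exact ⟨i, i.isLt, by rw [hi]; exact hx⟩
      obtain ⟨hn, hnx⟩ := Nat.find_spec hex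
      refine Set.mem_iUnion.mpr ⟨⟨Nat.find hex, hn⟩, hnx, ?_⟩
      intro j hj hjx
      exact Nat.find_min hex hj ⟨j.isLt, by simpa using hjx⟩
    · intro hx
      obtain ⟨i, hxi, -⟩ := Set.mem_iUnion.mp hx
      exact ⟨l.get i, Finset.mem_toList.mp (l.get_mem i), hxi⟩
  obtain ⟨i, hCi⟩ := hpr T hTA r C hdisj hunion
  refine hup A _ ?_ (hshift _ hCi (l.get i))
  rintro _ ⟨x, ⟨hx, -⟩, rfl⟩
  exact hx
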